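/- If P_1, ..., P_m are pairwise vertex-disjoint directed paths in a digraph G, and for each i at most one arc is added extending P_i from its endpoint into some P_j (j ≠ i), where the set of indices whose paths are extended forms an independent set in the graph with edges {i,j} whenever P_i's extension arc enters P_j, then the union of all paths and extension arcs has out-degree at most 1 at every vertex and contains no directed cycle. -/

import Mathlib

/-- The arc set obtained from the union of the paths `P i` (arcs between
consecutive vertices) together with, for each extended index `i ∈ S`, one
extension arc from the last vertex of `P i` to `ext i`. -/
def unionArcs {V : Type*} {m : ℕ} (P : Fin m → List V) (S : Finset (Fin m))
    (ext : Fin m → V) (u v : V) : Prop :=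
  (∃ i : Fin m, (u, v) ∈ (P i).zip (P i).tail) ∨
    (∃ i ∈ S, (P i).getLast? = some u ∧ v = ext i)

/-- If pairwise vertex-disjoint simple directed paths `P i` are extended, for
the indices `i` in an independent set `S` of the dependency graph (so each
extension arc enters a path `P (t i)` with `t i ≠ i` and `t i ∉ S`), then the
union of the paths and extension arcs has out-degree at most 1 everywhere and
contains no directed cycle. -/
theorem stmt15 {V : Type*} [Fintype V] (m : ℕ) (P : Fin m → List V)
    (hne : ∀ i, P i ≠ []) (hnd : ∀ i, (P i).Nodup)
    (hdisj : ∀ i j : Fin m, i ≠ j → ∀ v : V, v ∈ P i → v ∉ P j)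
    (S : Finset (Fin m)) (ext : Fin m → V) (t : Fin m → Fin m)
    (htarget : ∀ i ∈ S, ext i ∈ P (t i) ∧ t i ≠ i)
    (hind : ∀ i ∈ S, t i ∉ S) :
    (∀ u v w : V, unionArcs P S ext u v → unionArcs P S ext u w → v = w) ∧
      ∀ u : V, ¬ Relation.TransGen (unionArcs P S ext) u u := by
  classical
  -- basic facts
  have hzip : ∀ i (u v : V), (u, v) ∈ (P i).zip (P i).tail →
      ∃ n, ∃ h1 : n + 1 < (P i).length, (P i)[n]'(by omega) = u ∧ (P i)[n+1]'h1 = v := by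
    intro i u v hmem
    obtain ⟨n, hn, hget⟩ := List.mem_iff_getElem.1 hmem
    rw [List.getElem_zip] at hget
    have hlen : n < (P i).tail.length := lt_of_lt_of_le hn (by simp [List.length_zip])
    rw [List.length_tail] at hlen
    refine ⟨n, by omega, ?_, ?_⟩
    · exact congrArg Prod.fst hget
    · have := congrArg Prod.snd hget
      simpa [List.getElem_tail] using this
  have hlast : ∀ i (u : V), (P i).getLast? = some u →
      u = (P i)[(P i).length - 1]'(by
        have := List.length_pos_iff.2 (hne i); omega) := by
    intro i u hu
    obtain ⟨h, rfl⟩ := List.mem_getLast?_eq_getLast (by rw [hu]; rfl)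
    exact List.getLast_eq_getElem _
  -- out-degree ≤ 1
  have outdeg : ∀ u v w : V, unionArcs P S ext u v → unionArcs P S ext u w → v = w := by
    intro u v w h1 h2
    rcases h1 with ⟨i, hi⟩ | ⟨i, hiS, hiu, rfl⟩ <;>
      rcases h2 with ⟨j, hj⟩ | ⟨j, hjS, hju, hw⟩
    · obtain ⟨n, hn1, hnu, hnv⟩ := hzip i u v hi
      obtain ⟨k, hk1, hku, hkv⟩ := hzip j u w hj
      have hij : i = j := by
        by_contra hne'
        exact hdisj i j hne' u (hnu ▸ List.getElem_mem _) (hku ▸ List.getElem_mem _)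
      subst hij
      have : n = k := by
        have := List.Nodup.idxOf_getElem (hnd i) n (by omega)
        have h2 := List.Nodup.idxOf_getElem (hnd i) k (by omega)
        rw [hnu] at this; rw [hku] at h2; omega
      subst this; rw [← hnv, ← hkv]
    · -- path arc + extension arc from u : impossible
      obtain ⟨n, hn1, hnu, hnv⟩ := hzip i u v hi
      have hij : i = j := by
        by_contra hne'
        refine hdisj i j hne' u (hnu ▸ List.getElem_mem _) ?_
        rw [hlast j u hju]; exact List.getElem_mem _
      subst hij
      have hu' := hlast i u hju
      have e1 := List.Nodup.idxOf_getElem (hnd i) n (by omega)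
      have e2 := List.Nodup.idxOf_getElem (hnd i) ((P i).length - 1)
        (by have := List.length_pos_iff.2 (hne i); omega)
      rw [hnu] at e1; rw [← hu'] at e2; omega
    · obtain ⟨n, hn1, hnu, hnv⟩ := hzip j u w hj
      have hij : i = j := by
        by_contra hne'
        refine hdisj j i (Ne.symm hne') u (hnu ▸ List.getElem_mem _) ?_
        rw [hlast i u hiu]; exact List.getElem_mem _
      subst hij
      have hu' := hlast i u hiu
      have e1 := List.Nodup.idxOf_getElem (hnd i) n (by omega)
      have e2 := List.Nodup.idxOf_getElem (hnd i) ((P i).length - 1)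
        (by have := List.length_pos_iff.2 (hne i); omega)
      rw [hnu] at e1; rw [← hu'] at e2; omega
    · have hij : i = j := by
        by_contra hne'
        refine hdisj i j hne' u ?_ ?_
        · rw [hlast i u hiu]; exact List.getElem_mem _
        · rw [hlast j u hju]; exact List.getElem_mem _
      subst hij; rw [hw]
  refine ⟨outdeg, ?_⟩
  -- potential function
  set N := ∑ i, (P i).length with hN
  have hlenN : ∀ i, (P i).length ≤ N := fun i =>
    Finset.single_le_sum (f := fun i => (P i).length) (fun _ _ => Nat.zero_le _)
      (Finset.mem_univ i)
  set φ : V → ℕ := fun v =>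
    if h : ∃ i, v ∈ P i then
      (if h.choose ∈ S then 0 else N) + (P h.choose).idxOf v
    else 0 with hφ
  have hchoose : ∀ i (u : V) (hu : u ∈ P i) (h : ∃ j, u ∈ P j), h.choose = i := by
    intro i u hu h
    by_contra hne'
    exact hdisj h.choose i hne' u h.choose_spec hu
  have hφval : ∀ i (u : V), u ∈ P i →
      φ u = (if i ∈ S then 0 else N) + (P i).idxOf u := by
    intro i u hu
    have h : ∃ j, u ∈ P j := ⟨i, hu⟩
    simp only [hφ, dif_pos h, hchoose i u hu h]
  have key : ∀ u v : V, unionArcs P S ext u v → φ u < φ v := by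
    intro u v h
    rcases h with ⟨i, hi⟩ | ⟨i, hiS, hiu, rfl⟩
    · obtain ⟨n, hn1, hnu, hnv⟩ := hzip i u v hi
      rw [hφval i u (hnu ▸ List.getElem_mem _), hφval i v (hnv ▸ List.getElem_mem _)]
      have e1 := List.Nodup.idxOf_getElem (hnd i) n (by omega)
      have e2 := List.Nodup.idxOf_getElem (hnd i) (n+1) hn1
      rw [hnu] at e1; rw [hnv] at e2; omega
    · have hu' := hlast i u hiu
      have hpos := List.length_pos_iff.2 (hne i)
      have humem : u ∈ P i := by rw [hu']; exact List.getElem_mem _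
      rw [hφval i u humem, hφval (t i) (ext i) (htarget i hiS).1]
      have e2 := List.Nodup.idxOf_getElem (hnd i) ((P i).length - 1) (by omega)
      rw [← hu'] at e2
      rw [if_pos hiS, if_neg (hind i hiS)]
      have := hlenN i
      omega
  have mono : ∀ a b : V, Relation.TransGen (unionArcs P S ext) a b → φ a < φ b := by
    intro a b h
    induction h with
    | single h => exact key _ _ h
    | tail _ h ih => exact ih.trans (key _ _ h)
  exact fun u hu => lt_irrefl _ (mono u u hu)
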